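/- Let m ≥ 1 and let (g_k)_{k∈ℕ} be a sequence in ℝ^m with ‖g_k‖ → ∞. Then there exist a subsequence (g_{k_n})_{n∈ℕ}, finite subsets C_n ⊂ ℝ^m with #C_n > 1, and open boxes F_n = (−a_n^{(1)}, a_n^{(1)}) × ⋯ × (−a_n^{(m)}, a_n^{(m)}) with a_n^{(i)} > 0 and a_n^{(i)} → ∞ as n → ∞ for each i, such that: (a) F_{n−1} + C_n ⊆ F_n for all n ≥ 1; (b) the translates F_{n−1} + c, c ∈ C_n, are pairwise disjoint; (c) the infinite product ∏_{n≥1} λ(F_n)/(λ(F_{n−1}) · #C_n) converges (is finite), where λ is Lebesgue measure on ℝ^m; and (d) #(C_n ∩ (C_n − g_{k_n}))/#C_n → 1 as n → ∞. -/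

import Mathlib

open Filter Topology MeasureTheory

namespace CFaux
variable {m : ℕ}

open Classical in
noncomputable def pick (g : ℕ → Fin m → ℝ) (p : ℕ) (M : ℝ) : ℕ :=
  if h : ∃ K, p < K ∧ M ≤ ‖g K‖ then h.choose else 0

theorem pick_spec (g : ℕ → Fin m → ℝ)
    (hg : Tendsto (fun k => ‖g k‖) atTop atTop) (p : ℕ) (M : ℝ) :
    p < pick g p M ∧ M ≤ ‖g (pick g p M)‖ := by
  have h : ∃ K, p < K ∧ M ≤ ‖g K‖ := by
    have h1 : ∀ᶠ k in atTop, M ≤ ‖g k‖ := hg.eventually (eventually_ge_atTop M)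
    exact ((eventually_gt_atTop p).and h1).exists
  rw [pick]
  rw [dif_pos h]
  exact h.choose_spec

noncomputable def iStar (hm : 1 ≤ m) (v : Fin m → ℝ) : Fin m :=
  if h : ∃ i, ∀ j, |v j| ≤ |v i| then h.choose else ⟨0, hm⟩

theorem iStar_le (hm : 1 ≤ m) (v : Fin m → ℝ) (j : Fin m) :
    |v j| ≤ |v (iStar hm v)| := by
  have : Nonempty (Fin m) := ⟨⟨0, hm⟩⟩
  have h : ∃ i, ∀ j, |v j| ≤ |v i| := Finite.exists_max fun i => |v i|
  rw [iStar, dif_pos h]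
  exact h.choose_spec j

theorem norm_le_iStar (hm : 1 ≤ m) (v : Fin m → ℝ) : ‖v‖ ≤ |v (iStar hm v)| := by
  refine (pi_norm_le_iff_of_nonneg (abs_nonneg _)).2 fun i => ?_
  simpa [Real.norm_eq_abs] using iStar_le hm v i

/-- fill counts per coordinate -/
noncomputable def Lf (hm : 1 ≤ m) (n : ℕ) (a v : Fin m → ℝ) (i : Fin m) : ℕ :=
  if i = iStar hm v then ⌊(|v (iStar hm v)| / (2 * a i) - 1) / 2⌋₊
  else ⌈(4 ^ n * |v (iStar hm v)|) / a i⌉₊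

/-- next box half-widths -/
noncomputable def nA (hm : 1 ≤ m) (n : ℕ) (a v : Fin m → ℝ) (i : Fin m) : ℝ :=
  a i + 2 ^ n * |v i| + 2 * a i * (Lf hm n a v i)

/-- threshold for choosing a far element of the sequence -/
noncomputable def thr (n : ℕ) (a : Fin m → ℝ) : ℝ := 2 ^ (n + 3) * (1 + ∑ i, a i)

noncomputable def st (g : ℕ → Fin m → ℝ) (hm : 1 ≤ m) : ℕ → ℕ × (Fin m → ℝ)
  | 0 => (pick g 0 (thr 0 ((fun _ => 1) : Fin m → ℝ)), fun _ => 1)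
  | n + 1 =>
      (pick g (st g hm n).1 (thr (n + 1) (nA hm n (st g hm n).2 (g (st g hm n).1))),
        nA hm n (st g hm n).2 (g (st g hm n).1))

noncomputable def kseq (g : ℕ → Fin m → ℝ) (hm : 1 ≤ m) (n : ℕ) : ℕ := (st g hm n).1
noncomputable def aseq (g : ℕ → Fin m → ℝ) (hm : 1 ≤ m) (n : ℕ) : Fin m → ℝ := (st g hm n).2

theorem aseq_zero (g : ℕ → Fin m → ℝ) (hm : 1 ≤ m) : aseq g hm 0 = fun _ => 1 := by
  unfold aseq; rw [st]
theorem aseq_succ (g : ℕ → Fin m → ℝ) (hm : 1 ≤ m) (n : ℕ) :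
    aseq g hm (n + 1) = nA hm n (aseq g hm n) (g (kseq g hm n)) := by
  unfold aseq kseq; rw [st]
theorem kseq_succ (g : ℕ → Fin m → ℝ) (hm : 1 ≤ m) (n : ℕ) :
    kseq g hm (n + 1) = pick g (kseq g hm n) (thr (n + 1) (aseq g hm (n + 1))) := by
  unfold aseq kseq; rw [st]

variable (g : ℕ → Fin m → ℝ) (hm : 1 ≤ m)

theorem apos : ∀ n i, 0 < aseq g hm n i := by
  intro n
  induction n with
  | zero => intro i; simp [aseq_zero]
  | succ n ih =>
    intro i
    rw [aseq_succ]
    unfold nA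
    have h1 := ih i
    positivity

theorem kmono (hg : Tendsto (fun k => ‖g k‖) atTop atTop) : StrictMono (kseq g hm) := by
  apply strictMono_nat_of_lt_succ
  intro n
  rw [kseq_succ]
  exact (pick_spec g hg _ _).1

theorem thr_le (hg : Tendsto (fun k => ‖g k‖) atTop atTop) (n : ℕ) :
    thr n (aseq g hm n) ≤ ‖g (kseq g hm n)‖ := by
  cases n with
  | zero =>
    have h := (pick_spec g hg 0 (thr 0 ((fun _ => 1) : Fin m → ℝ))).2
    rw [aseq_zero]
    exact h
  | succ n => rw [kseq_succ]; exact (pick_spec g hg _ _).2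

/-- the large norm value at step n -/
noncomputable def bb (n : ℕ) : ℝ := |g (kseq g hm n) (iStar hm (g (kseq g hm n)))|

theorem thr_le_bb (hg : Tendsto (fun k => ‖g k‖) atTop atTop) (n : ℕ) :
    thr n (aseq g hm n) ≤ bb g hm n :=
  (thr_le g hm hg n).trans (norm_le_iStar hm _)

theorem bb_ge (hg : Tendsto (fun k => ‖g k‖) atTop atTop) (n : ℕ) (i : Fin m) :
    2 ^ (n + 3) * aseq g hm n i ≤ bb g hm n := by
  refine le_trans ?_ (thr_le_bb g hm hg n)
  unfold thr
  have h1 : aseq g hm n i ≤ 1 + ∑ j, aseq g hm n j := by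
    have := Finset.single_le_sum (f := fun j => aseq g hm n j)
      (fun j _ => (apos g hm n j).le) (Finset.mem_univ i)
    linarith
  nlinarith [pow_pos (by norm_num : (0:ℝ) < 2) (n + 3)]

theorem bb_ge_one (hg : Tendsto (fun k => ‖g k‖) atTop atTop) (n : ℕ) :
    2 ^ (n + 3) ≤ bb g hm n := by
  refine le_trans ?_ (thr_le_bb g hm hg n)
  unfold thr
  have h1 : (0:ℝ) ≤ ∑ j, aseq g hm n j :=
    Finset.sum_nonneg fun j _ => (apos g hm n j).le
  nlinarith [pow_pos (by norm_num : (0:ℝ) < 2) (n + 3)]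

section Step

theorem bb_pos (hg : Tendsto (fun k => ‖g k‖) atTop atTop) (n : ℕ) : 0 < bb g hm n :=
  lt_of_lt_of_le (by positivity) (bb_ge_one g hm hg n)

theorem pow8 (n : ℕ) : (8:ℝ) ≤ 2 ^ (n + 3) := by
  calc (8:ℝ) = 2 ^ 3 := by norm_num
  _ ≤ 2 ^ (n + 3) := pow_le_pow_right₀ (by norm_num) (by omega)

theorem bb_eq (n : ℕ) : |g (kseq g hm n) (iStar hm (g (kseq g hm n)))| = bb g hm n := rfl

theorem hL1 (hg : Tendsto (fun k => ‖g k‖) atTop atTop) (n : ℕ) (i : Fin m) :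
    1 ≤ Lf hm n (aseq g hm n) (g (kseq g hm n)) i := by
  have hai : 0 < aseq g hm n i := apos g hm n i
  have hbi : 2 ^ (n + 3) * aseq g hm n i ≤ bb g hm n := bb_ge g hm hg n i
  have h8 : (8:ℝ) * aseq g hm n i ≤ bb g hm n := by nlinarith [pow8 n]
  unfold Lf
  rw [bb_eq]
  split_ifs with h
  · refine Nat.le_floor ?_
    rw [Nat.cast_one, le_div_iff₀ (by norm_num : (0:ℝ) < 2), le_sub_iff_add_le,
      le_div_iff₀ (by positivity)]
    nlinarith
  · rw [Nat.one_le_ceil_iff]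
    have h4 : (1:ℝ) ≤ 4 ^ n := one_le_pow₀ (by norm_num : (1:ℝ) ≤ 4)
    have hb := bb_pos g hm hg n
    positivity

theorem hL2 (hg : Tendsto (fun k => ‖g k‖) atTop atTop) (n : ℕ) :
    2 * aseq g hm n (iStar hm (g (kseq g hm n))) *
      (2 * (Lf hm n (aseq g hm n) (g (kseq g hm n)) (iStar hm (g (kseq g hm n))) : ℝ) + 1)
      ≤ bb g hm n := by
  set I := iStar hm (g (kseq g hm n)) with hI
  have hai : 0 < aseq g hm n I := apos g hm n I
  have hbi : 2 ^ (n + 3) * aseq g hm n I ≤ bb g hm n := bb_ge g hm hg n I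
  have hx : (1:ℝ) ≤ bb g hm n / (2 * aseq g hm n I) := by
    rw [le_div_iff₀ (by positivity)]
    nlinarith [pow8 n]
  have hfl : (Lf hm n (aseq g hm n) (g (kseq g hm n)) I : ℝ)
      ≤ (bb g hm n / (2 * aseq g hm n I) - 1) / 2 := by
    unfold Lf
    rw [bb_eq, ← hI, if_pos rfl]
    exact Nat.floor_le (by linarith)
  rw [le_div_iff₀ (by norm_num : (0:ℝ) < 2), le_sub_iff_add_le,
    le_div_iff₀ (by positivity)] at hfl
  nlinarith [hfl]

theorem hL3 (n : ℕ) :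
    bb g hm n ≤ 2 * aseq g hm n (iStar hm (g (kseq g hm n))) *
      (2 * (Lf hm n (aseq g hm n) (g (kseq g hm n)) (iStar hm (g (kseq g hm n))) : ℝ) + 3) := by
  set I := iStar hm (g (kseq g hm n)) with hI
  have hai : 0 < aseq g hm n I := apos g hm n I
  have hfl : (bb g hm n / (2 * aseq g hm n I) - 1) / 2 <
      (Lf hm n (aseq g hm n) (g (kseq g hm n)) I : ℝ) + 1 := by
    unfold Lf
    rw [bb_eq, ← hI, if_pos rfl]
    exact Nat.lt_floor_add_one _
  rw [div_lt_iff₀ (by norm_num : (0:ℝ) < 2), sub_lt_iff_lt_add,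
    div_lt_iff₀ (by positivity)] at hfl
  nlinarith [hfl]

theorem hL4 (hg : Tendsto (fun k => ‖g k‖) atTop atTop) (n : ℕ) (i : Fin m)
    (hi : i ≠ iStar hm (g (kseq g hm n))) :
    2 * (4 ^ n * bb g hm n) ≤
      aseq g hm n i * (2 * (Lf hm n (aseq g hm n) (g (kseq g hm n)) i : ℝ) + 1) := by
  have hai : 0 < aseq g hm n i := apos g hm n i
  have hceil : (4 ^ n * bb g hm n) / aseq g hm n i
      ≤ (Lf hm n (aseq g hm n) (g (kseq g hm n)) i : ℝ) := by
    unfold Lf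
    rw [bb_eq, if_neg hi]
    exact Nat.le_ceil _
  rw [div_le_iff₀ hai] at hceil
  nlinarith [hceil, hai]

theorem abs_le_bb (n : ℕ) (i : Fin m) : |g (kseq g hm n) i| ≤ bb g hm n := iStar_le hm _ i

theorem a_succ_eq (n : ℕ) (i : Fin m) :
    aseq g hm (n + 1) i = aseq g hm n i + 2 ^ n * |g (kseq g hm n) i|
      + 2 * aseq g hm n i * (Lf hm n (aseq g hm n) (g (kseq g hm n)) i : ℝ) := by
  rw [aseq_succ]; rfl

theorem a_succ_ge (hg : Tendsto (fun k => ‖g k‖) atTop atTop) (n : ℕ) (i : Fin m) :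
    3 * aseq g hm n i ≤ aseq g hm (n + 1) i := by
  rw [a_succ_eq]
  have h1 := hL1 g hm hg n i
  have h1' : (1:ℝ) ≤ (Lf hm n (aseq g hm n) (g (kseq g hm n)) i : ℝ) := by exact_mod_cast h1
  have hai : 0 < aseq g hm n i := apos g hm n i
  have := abs_nonneg (g (kseq g hm n) i)
  nlinarith [pow_pos (by norm_num : (0:ℝ) < 2) n]

theorem a_ge_pow (hg : Tendsto (fun k => ‖g k‖) atTop atTop) (n : ℕ) (i : Fin m) :
    (3:ℝ) ^ n ≤ aseq g hm n i := by
  induction n with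
  | zero => simp [aseq_zero]
  | succ n ih =>
    have h := a_succ_ge g hm hg n i
    have : (3:ℝ) ^ (n + 1) = 3 * 3 ^ n := by ring
    nlinarith

theorem a_tendsto (hg : Tendsto (fun k => ‖g k‖) atTop atTop) (i : Fin m) :
    Tendsto (fun n => aseq g hm n i) atTop atTop := by
  refine tendsto_atTop_mono (fun n => a_ge_pow g hm hg n i) ?_
  exact tendsto_pow_atTop_atTop_of_one_lt (by norm_num : (1:ℝ) < 3)

end Step

/-- weight: the progression factor sits at the special coordinate -/
noncomputable def wgt (n : ℕ) (i : Fin m) : ℝ :=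
  if i = iStar hm (g (kseq g hm n)) then 2 * 2 ^ n + 1 else 1

theorem wgt_prod (n : ℕ) : (∏ i, wgt g hm n i) = 2 * 2 ^ n + 1 := by
  unfold wgt
  rw [Finset.prod_ite_eq' Finset.univ (iStar hm (g (kseq g hm n)))
    (fun _ => (2 * 2 ^ n + 1 : ℝ))]
  simp

theorem hfac_low (hg : Tendsto (fun k => ‖g k‖) atTop atTop) (n : ℕ) (i : Fin m) :
    aseq g hm n i * (2 * (Lf hm n (aseq g hm n) (g (kseq g hm n)) i : ℝ) + 1) * wgt g hm n i
      ≤ aseq g hm (n + 1) i := by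
  have hai : 0 < aseq g hm n i := apos g hm n i
  rw [a_succ_eq]
  unfold wgt
  split_ifs with h
  · subst h
    rw [bb_eq]
    have h2 := hL2 g hm hg n
    nlinarith [pow_pos (by norm_num : (0:ℝ) < 2) n]
  · have := abs_nonneg (g (kseq g hm n) i)
    nlinarith [pow_pos (by norm_num : (0:ℝ) < 2) n]

theorem hfac_up (hg : Tendsto (fun k => ‖g k‖) atTop atTop) (n : ℕ) (i : Fin m) :
    aseq g hm (n + 1) i ≤ (1 + (2⁻¹ : ℝ) ^ n) *
      (aseq g hm n i * (2 * (Lf hm n (aseq g hm n) (g (kseq g hm n)) i : ℝ) + 1) * wgt g hm n i) := by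
  have hai : 0 < aseq g hm n i := apos g hm n i
  have hL1' : (1:ℝ) ≤ (Lf hm n (aseq g hm n) (g (kseq g hm n)) i : ℝ) := by
    exact_mod_cast hL1 g hm hg n i
  have hb := bb_pos g hm hg n
  rw [a_succ_eq]
  unfold wgt
  split_ifs with h
  · -- special coordinate
    subst h
    rw [bb_eq]
    have h3 := hL3 g hm n
    have hbi := bb_ge g hm hg n (iStar hm (g (kseq g hm n)))
    set b := bb g hm n with hbdef
    set a := aseq g hm n (iStar hm (g (kseq g hm n))) with hadef
    set Lv : ℝ := (Lf hm n (aseq g hm n) (g (kseq g hm n)) (iStar hm (g (kseq g hm n))) : ℝ)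
      with hLv
    have hai' : 0 < a := hai
    set A := a * (2 * Lv + 1) with hA
    have hApos : 0 < A := by positivity
    have h3' : b ≤ 2 * A + 4 * a := by rw [hA]; nlinarith [h3]
    have hbig : (4:ℝ) ≤ 2 ^ (n + 2) := by
      calc (4:ℝ) = 2 ^ 2 := by norm_num
      _ ≤ 2 ^ (n + 2) := pow_le_pow_right₀ (by norm_num) (by omega)
    have hAa : 2 ^ (n + 1) * a ≤ A := by
      have e1 : (2:ℝ) ^ (n + 3) = 2 * 2 ^ (n + 2) := by ring
      have h22 : (2:ℝ) ^ (n + 2) = 2 * 2 ^ (n + 1) := by ring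
      nlinarith [hbi, h3', hai']
    have hepsA : 2 * A ≤ (2⁻¹:ℝ) ^ n * (2 * 2 ^ n + 1) * A := by
      have h1 : ((2⁻¹:ℝ) ^ n) * (2 * 2 ^ n + 1) = 2 + (2⁻¹:ℝ)^n := by
        have h2 : ((2⁻¹:ℝ) ^ n) * 2 ^ n = 1 := by rw [← mul_pow]; norm_num
        nlinarith [h2]
      rw [h1]
      nlinarith [pow_pos (by norm_num : (0:ℝ) < 2⁻¹) n, hApos]
    have hexp : a + 2 ^ n * b + 2 * a * Lv = A + 2 ^ n * b := by rw [hA]; ring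
    rw [hexp]
    have h2nb : 2 ^ n * b ≤ 2 ^ (n + 1) * A + 2 * (2 ^ (n + 1) * a) := by
      have e2 : (2:ℝ) ^ (n+1) = 2 ^ n * 2 := by ring
      nlinarith [pow_pos (by norm_num : (0:ℝ) < 2) n, h3']
    calc A + 2 ^ n * b ≤ A + 2 ^ (n + 1) * A + 2 * (2 ^ (n + 1) * a) := by linarith
    _ ≤ A + 2 ^ (n + 1) * A + 2 * A := by linarith [hAa]
    _ ≤ A + 2 ^ (n + 1) * A + (2⁻¹:ℝ) ^ n * (2 * 2 ^ n + 1) * A := by linarith [hepsA]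
    _ = (1 + 2⁻¹ ^ n) * (A * (2 * 2 ^ n + 1)) := by ring
  · -- other coordinates
    have h4 := hL4 g hm hg n i h
    have habs := abs_le_bb g hm n i
    have h4n : ((2⁻¹:ℝ) ^ n) * (4 ^ n) = 2 ^ n := by
      rw [← mul_pow]; norm_num
    have habs0 := abs_nonneg (g (kseq g hm n) i)
    nlinarith [pow_pos (by norm_num : (0:ℝ) < 2) n, pow_pos (by norm_num : (0:ℝ) < 2⁻¹) n,
      pow_pos (by norm_num : (0:ℝ) < 4) n, mul_le_mul_of_nonneg_left habs
        (le_of_lt (pow_pos (by norm_num : (0:ℝ) < 2) n))]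

/-- the affine parametrization of the set `C n` -/
noncomputable def Phi (a v : Fin m → ℝ) (p : ℤ × (Fin m → ℤ)) : Fin m → ℝ :=
  fun i => (p.1 : ℝ) * v i + 2 * a i * (p.2 i : ℝ)

/-- the parameter grid -/
noncomputable def Sfin (n : ℕ) : Finset (ℤ × (Fin m → ℤ)) :=
  Finset.Icc (-(2 ^ n : ℤ)) (2 ^ n) ×ˢ
    Fintype.piFinset fun i =>
      Finset.Icc (-(Lf hm n (aseq g hm n) (g (kseq g hm n)) i : ℤ))
        (Lf hm n (aseq g hm n) (g (kseq g hm n)) i)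

theorem mem_Sfin {n : ℕ} {p : ℤ × (Fin m → ℤ)} :
    p ∈ Sfin g hm n ↔ (|p.1| ≤ 2 ^ n ∧
      ∀ i, |p.2 i| ≤ (Lf hm n (aseq g hm n) (g (kseq g hm n)) i : ℤ)) := by
  unfold Sfin
  rw [Finset.mem_product]
  simp only [Finset.mem_Icc, Fintype.mem_piFinset, abs_le]

/-- separation: distinct parameters give well-separated points -/
theorem sep (hg : Tendsto (fun k => ‖g k‖) atTop atTop) (n : ℕ)
    {p q : ℤ × (Fin m → ℤ)} (hp : p ∈ Sfin g hm n) (hq : q ∈ Sfin g hm n) (hne : p ≠ q) :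
    ∃ i, 2 * aseq g hm n i ≤
      |Phi (aseq g hm n) (g (kseq g hm n)) p i - Phi (aseq g hm n) (g (kseq g hm n)) q i| := by
  rw [mem_Sfin] at hp hq
  obtain ⟨hp1, hp2⟩ := hp
  obtain ⟨hq1, hq2⟩ := hq
  by_cases hj : p.1 = q.1
  · -- fills differ
    have hl : p.2 ≠ q.2 := by
      intro hl
      exact hne (Prod.ext hj hl)
    obtain ⟨i, hi⟩ := Function.ne_iff.1 hl
    refine ⟨i, ?_⟩
    have hd : Phi (aseq g hm n) (g (kseq g hm n)) p i
        - Phi (aseq g hm n) (g (kseq g hm n)) q i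
        = 2 * aseq g hm n i * ((p.2 i : ℝ) - (q.2 i : ℝ)) := by
      unfold Phi
      rw [hj]
      ring
    rw [hd, abs_mul]
    have h1 : (1:ℝ) ≤ |(p.2 i : ℝ) - (q.2 i : ℝ)| := by
      exact_mod_cast Int.one_le_abs (sub_ne_zero.2 hi)
    have hai : 0 < aseq g hm n i := apos g hm n i
    have h2 : |2 * aseq g hm n i| = 2 * aseq g hm n i := abs_of_pos (by positivity)
    rw [h2]
    nlinarith [h1, hai]
  · -- progression indices differ : use the special coordinate
    set I := iStar hm (g (kseq g hm n)) with hI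
    refine ⟨I, ?_⟩
    set a := aseq g hm n I with ha
    set L : ℝ := (Lf hm n (aseq g hm n) (g (kseq g hm n)) I : ℝ) with hLr
    have hai : 0 < a := apos g hm n I
    have hd : Phi (aseq g hm n) (g (kseq g hm n)) p I
        - Phi (aseq g hm n) (g (kseq g hm n)) q I
        = ((p.1 : ℝ) - q.1) * g (kseq g hm n) I + 2 * a * ((p.2 I : ℝ) - q.2 I) := by
      unfold Phi; ring
    set X := ((p.1 : ℝ) - q.1) * g (kseq g hm n) I with hX
    set Y := 2 * a * ((p.2 I : ℝ) - q.2 I) with hY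
    have htri : |X| ≤ |X + Y| + |Y| := by
      calc |X| = |X + Y + -Y| := by ring_nf
      _ ≤ |X + Y| + |-Y| := abs_add_le _ _
      _ = |X + Y| + |Y| := by rw [abs_neg]
    have hXb : bb g hm n ≤ |X| := by
      rw [hX, abs_mul, bb_eq]
      have h1 : (1:ℝ) ≤ |(p.1 : ℝ) - q.1| := by
        exact_mod_cast Int.one_le_abs (sub_ne_zero.2 hj)
      nlinarith [bb_pos g hm hg n, h1]
    have hYb : |Y| ≤ 2 * a * (2 * L) := by
      rw [hY, abs_mul]
      have h2 : |(p.2 I : ℝ) - q.2 I| ≤ 2 * L := by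
        have hpi : |(p.2 I : ℝ)| ≤ L := by
          rw [hLr, ← Int.cast_abs]
          exact_mod_cast hp2 I
        have hqi : |(q.2 I : ℝ)| ≤ L := by
          rw [hLr, ← Int.cast_abs]
          exact_mod_cast hq2 I
        calc |(p.2 I : ℝ) - q.2 I| ≤ |(p.2 I : ℝ)| + |(q.2 I : ℝ)| := abs_sub _ _
        _ ≤ 2 * L := by linarith
      have h3 : |2 * a| = 2 * a := abs_of_pos (by positivity)
      rw [h3]
      nlinarith [abs_nonneg ((p.2 I : ℝ) - q.2 I)]
    have hL2' := hL2 g hm hg n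
    rw [← hI, ← ha, ← hLr] at hL2'
    rw [hd]
    -- |X + Y| ≥ |X| - |Y| ≥ b - 4aL ≥ 2a
    have : bb g hm n - 2 * a * (2 * L) ≤ |X + Y| := by linarith
    linarith [hL2', this]

theorem phi_injOn (hg : Tendsto (fun k => ‖g k‖) atTop atTop) (n : ℕ) :
    Set.InjOn (Phi (aseq g hm n) (g (kseq g hm n))) (Sfin g hm n) := by
  intro p hp q hq hpq
  by_contra hne
  obtain ⟨i, hi⟩ := sep g hm hg n hp hq hne
  rw [hpq] at hi
  simp only [sub_self, abs_zero] at hi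
  exact absurd hi (by nlinarith [apos g hm n i])

/-- the set `C n`, as a finset -/
noncomputable def Cfin (n : ℕ) : Finset (Fin m → ℝ) :=
  (Sfin g hm n).image (Phi (aseq g hm n) (g (kseq g hm n)))

theorem Icc_int_card (r s : ℕ) : (Finset.Icc (-(r:ℤ)) s).card = r + s + 1 := by
  rw [Int.card_Icc]
  omega

theorem Sfin_card (n : ℕ) :
    (Sfin g hm n).card = (2 * 2 ^ n + 1) *
      ∏ i, (2 * Lf hm n (aseq g hm n) (g (kseq g hm n)) i + 1) := by
  unfold Sfin
  rw [Finset.card_product, Fintype.card_piFinset]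
  congr 1
  · have : ((2:ℤ)^n) = ((2^n : ℕ) : ℤ) := by push_cast; ring
    rw [this, Icc_int_card]
    omega
  · refine Finset.prod_congr rfl fun i _ => ?_
    rw [Icc_int_card]
    omega

theorem Cfin_card (hg : Tendsto (fun k => ‖g k‖) atTop atTop) (n : ℕ) :
    (Cfin g hm n).card = (2 * 2 ^ n + 1) *
      ∏ i, (2 * Lf hm n (aseq g hm n) (g (kseq g hm n)) i + 1) := by
  unfold Cfin
  rw [Finset.card_image_of_injOn (phi_injOn g hm hg n), Sfin_card]

/-- smaller parameter grid, shifted-invariant part -/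
noncomputable def Sfin' (n : ℕ) : Finset (ℤ × (Fin m → ℤ)) :=
  Finset.Icc (-(2 ^ n : ℤ)) (2 ^ n - 1) ×ˢ
    Fintype.piFinset fun i =>
      Finset.Icc (-(Lf hm n (aseq g hm n) (g (kseq g hm n)) i : ℤ))
        (Lf hm n (aseq g hm n) (g (kseq g hm n)) i)

theorem Sfin'_subset (n : ℕ) : Sfin' g hm n ⊆ Sfin g hm n := by
  unfold Sfin' Sfin
  refine Finset.product_subset_product (Finset.Icc_subset_Icc_right (by omega)) le_rfl

noncomputable def Dfin (n : ℕ) : Finset (Fin m → ℝ) :=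
  (Sfin' g hm n).image (Phi (aseq g hm n) (g (kseq g hm n)))

theorem Dfin_card (hg : Tendsto (fun k => ‖g k‖) atTop atTop) (n : ℕ) :
    (Dfin g hm n).card = (2 * 2 ^ n) *
      ∏ i, (2 * Lf hm n (aseq g hm n) (g (kseq g hm n)) i + 1) := by
  unfold Dfin
  rw [Finset.card_image_of_injOn
    ((phi_injOn g hm hg n).mono (by exact_mod_cast Sfin'_subset g hm n))]
  unfold Sfin'
  rw [Finset.card_product, Fintype.card_piFinset]
  congr 1
  · have h1 : ((2:ℤ)^n) = ((2^n : ℕ) : ℤ) := by push_cast; ring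
    rw [Int.card_Icc]
    have h2 : (2:ℤ)^n - 1 + 1 - -2^n = 2 * 2^n := by ring
    rw [h2, h1]
    have : ((2 * 2^n : ℕ) : ℤ) = 2 * ((2^n : ℕ) : ℤ) := by push_cast; ring
    omega
  · refine Finset.prod_congr rfl fun i _ => ?_
    rw [Icc_int_card]
    omega

theorem Dfin_subset_C (n : ℕ) : Dfin g hm n ⊆ Cfin g hm n := by
  unfold Dfin Cfin
  exact Finset.image_subset_image (Sfin'_subset g hm n)

theorem Dfin_subset_shift (n : ℕ) :
    (Dfin g hm n : Set (Fin m → ℝ)) ⊆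
      (fun x => x - g (kseq g hm n)) '' (Cfin g hm n : Set (Fin m → ℝ)) := by
  intro y hy
  rw [Finset.mem_coe] at hy
  unfold Dfin at hy
  rw [Finset.mem_image] at hy
  obtain ⟨p, hp, rfl⟩ := hy
  unfold Sfin' at hp
  rw [Finset.mem_product, Finset.mem_Icc] at hp
  refine ⟨Phi (aseq g hm n) (g (kseq g hm n)) (p.1 + 1, p.2), ?_, ?_⟩
  · rw [Finset.mem_coe]
    unfold Cfin
    rw [Finset.mem_image]
    refine ⟨(p.1 + 1, p.2), ?_, rfl⟩
    unfold Sfin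
    rw [Finset.mem_product, Finset.mem_Icc]
    exact ⟨⟨by omega, by omega⟩, hp.2⟩
  · funext i
    unfold Phi
    simp only [Pi.sub_apply]
    push_cast
    ring

theorem vol_box (a : Fin m → ℝ) (ha : ∀ i, 0 ≤ a i) :
    (volume (Set.pi Set.univ fun i => Set.Ioo (-(a i)) (a i))).toReal = ∏ i, (2 * a i) := by
  rw [volume_pi_pi, ENNReal.toReal_prod]
  refine Finset.prod_congr rfl fun i _ => ?_
  rw [Real.volume_Ioo, ENNReal.toReal_ofReal (by linarith [ha i])]
  ring

end CFaux


open CFaux in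
theorem stmt3 (m : ℕ) (hm : 1 ≤ m) (g : ℕ → (Fin m → ℝ))
    (hg : Tendsto (fun k => ‖g k‖) atTop atTop) :
    ∃ k : ℕ → ℕ, StrictMono k ∧
      ∃ (C : ℕ → Set (Fin m → ℝ)) (a : ℕ → Fin m → ℝ) (F : ℕ → Set (Fin m → ℝ)),
        (∀ n, F n = Set.pi Set.univ fun i => Set.Ioo (-(a n i)) (a n i)) ∧
        (∀ n i, 0 < a n i) ∧
        (∀ i, Tendsto (fun n => a n i) atTop atTop) ∧
        (∀ n, (C n).Finite) ∧
        (∀ n, 1 < (C n).ncard) ∧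
        (∀ n, ∀ c ∈ C n, ∀ x ∈ F n, x + c ∈ F (n + 1)) ∧
        (∀ n, (C n).Pairwise fun c c' =>
          Disjoint ((· + c) '' F n) ((· + c') '' F n)) ∧
        (∃ L : ℝ, Tendsto (fun N => ∏ n ∈ Finset.range N,
            (volume (F (n + 1))).toReal / ((volume (F n)).toReal * (C n).ncard))
          atTop (𝓝 L)) ∧
        Tendsto (fun n =>
            ((C n ∩ (fun x => x - g (k n)) '' C n).ncard : ℝ) / ((C n).ncard : ℝ))
          atTop (𝓝 1) := by
  classical
  set a : ℕ → Fin m → ℝ := aseq g hm with ha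
  set CC : ℕ → Set (Fin m → ℝ) := fun n => (Cfin g hm n : Set (Fin m → ℝ)) with hCC
  set FF : ℕ → Set (Fin m → ℝ) :=
    fun n => Set.pi Set.univ fun i => Set.Ioo (-(a n i)) (a n i) with hFF
  -- abbreviations
  have hapos : ∀ n i, 0 < a n i := apos g hm
  set W : ℕ → ℕ := fun n => ∏ i, (2 * Lf hm n (a n) (g (kseq g hm n)) i + 1) with hW
  have hWpos : ∀ n, 0 < W n := fun n => Finset.prod_pos fun i _ => by omega
  have hcard : ∀ n, (Cfin g hm n).card = (2 * 2 ^ n + 1) * W n := fun n => Cfin_card g hm hg n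
  have hcardpos : ∀ n, 0 < (Cfin g hm n).card := by
    intro n
    rw [hcard n]
    have := hWpos n
    positivity
  have hVol : ∀ n, (volume (FF n)).toReal = ∏ i, 2 * a n i :=
    fun n => vol_box (a n) fun i => (hapos n i).le
  have hVolpos : ∀ n, 0 < ∏ i, 2 * a n i :=
    fun n => Finset.prod_pos fun i _ => by have := hapos n i; positivity
  refine ⟨kseq g hm, kmono g hm hg, CC, a, FF, fun n => rfl, hapos, a_tendsto g hm hg,
    fun n => (Cfin g hm n).finite_toSet, ?_, ?_, ?_, ?_, ?_⟩
  · -- more than one element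
    intro n
    rw [hCC]
    rw [Set.ncard_coe_finset, hcard n]
    have h1 : 1 ≤ 2 ^ n := Nat.one_le_two_pow
    have h2 := hWpos n
    nlinarith
  · -- translations map F n into F (n+1)
    intro n c hc x hx
    rw [hCC, Finset.mem_coe] at hc
    unfold Cfin at hc
    rw [Finset.mem_image] at hc
    obtain ⟨p, hp, rfl⟩ := hc
    rw [mem_Sfin] at hp
    rw [hFF, Set.mem_pi]
    intro i _
    rw [Pi.add_apply]
    have hxi : x i ∈ Set.Ioo (-(a n i)) (a n i) := hx i (Set.mem_univ i)
    rw [Set.mem_Ioo] at hxi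
    have hxa : |x i| < a n i := abs_lt.2 ⟨by linarith [hxi.1], hxi.2⟩
    have hj : |(p.1 : ℝ)| ≤ 2 ^ n := by exact_mod_cast hp.1
    have hl : |(p.2 i : ℝ)| ≤ (Lf hm n (a n) (g (kseq g hm n)) i : ℝ) := by
      exact_mod_cast hp.2 i
    have hphi : |Phi (a n) (g (kseq g hm n)) p i| ≤
        2 ^ n * |g (kseq g hm n) i| +
          2 * a n i * (Lf hm n (a n) (g (kseq g hm n)) i : ℝ) := by
      unfold Phi
      calc |(p.1 : ℝ) * g (kseq g hm n) i + 2 * a n i * (p.2 i : ℝ)|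
          ≤ |(p.1 : ℝ) * g (kseq g hm n) i| + |2 * a n i * (p.2 i : ℝ)| := abs_add_le _ _
      _ = |(p.1 : ℝ)| * |g (kseq g hm n) i| + 2 * a n i * |(p.2 i : ℝ)| := by
          rw [abs_mul, abs_mul, abs_of_pos (show (0:ℝ) < 2 * a n i by
            have := hapos n i; positivity)]
      _ ≤ 2 ^ n * |g (kseq g hm n) i| +
          2 * a n i * (Lf hm n (a n) (g (kseq g hm n)) i : ℝ) := by
          have h2 := hapos n i
          have := abs_nonneg (g (kseq g hm n) i)
          have := abs_nonneg ((p.2 i : ℝ))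
          nlinarith
    have hfin : |x i + Phi (a n) (g (kseq g hm n)) p i| < a (n + 1) i := by
      rw [ha, a_succ_eq]
      calc |x i + Phi (a n) (g (kseq g hm n)) p i|
          ≤ |x i| + |Phi (a n) (g (kseq g hm n)) p i| := abs_add_le _ _
      _ < a n i + (2 ^ n * |g (kseq g hm n) i| +
          2 * a n i * (Lf hm n (a n) (g (kseq g hm n)) i : ℝ)) := by
          have := hphi; linarith
      _ = aseq g hm n i + 2 ^ n * |g (kseq g hm n) i|
          + 2 * aseq g hm n i * (Lf hm n (aseq g hm n) (g (kseq g hm n)) i : ℝ) := by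
          rw [ha]; ring
    rw [abs_lt] at hfin
    exact Set.mem_Ioo.2 ⟨by linarith [hfin.1], hfin.2⟩
  · -- pairwise disjointness of translates
    intro n c hc c' hc' hne
    rw [hCC, Finset.mem_coe] at hc hc'
    unfold Cfin at hc hc'
    rw [Finset.mem_image] at hc hc'
    obtain ⟨p, hp, rfl⟩ := hc
    obtain ⟨q, hq, rfl⟩ := hc'
    have hpq : p ≠ q := by
      intro h
      exact hne (by rw [h])
    obtain ⟨i, hi⟩ := sep g hm hg n hp hq hpq
    rw [Set.disjoint_left]
    rintro y ⟨x, hx, rfl⟩ ⟨x', hx', hEq⟩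
    have hxi : x i ∈ Set.Ioo (-(a n i)) (a n i) := hx i (Set.mem_univ i)
    have hxi' : x' i ∈ Set.Ioo (-(a n i)) (a n i) := hx' i (Set.mem_univ i)
    rw [Set.mem_Ioo] at hxi hxi'
    have hEqi : x' i + Phi (a n) (g (kseq g hm n)) q i
        = x i + Phi (a n) (g (kseq g hm n)) p i := congrFun hEq i
    have : |Phi (a n) (g (kseq g hm n)) p i - Phi (a n) (g (kseq g hm n)) q i| < 2 * a n i := by
      have h1 : Phi (a n) (g (kseq g hm n)) p i - Phi (a n) (g (kseq g hm n)) q i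
          = x' i - x i := by linarith
      rw [h1, abs_lt]
      constructor <;> nlinarith [hxi.1, hxi.2, hxi'.1, hxi'.2]
    linarith [hi]
  · -- convergence of the product
    set P : ℕ → ℝ := fun N => ∏ n ∈ Finset.range N,
      (volume (FF (n + 1))).toReal / ((volume (FF n)).toReal * ((CC n).ncard : ℝ)) with hP
    have hncardC : ∀ n, ((CC n).ncard : ℝ) = ((2 * 2 ^ n + 1) * W n : ℕ) := by
      intro n
      rw [hCC, Set.ncard_coe_finset, hcard n]
    set f : ℕ → ℝ := fun n =>
      (volume (FF (n + 1))).toReal / ((volume (FF n)).toReal * ((CC n).ncard : ℝ)) with hf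
    have hden : ∀ n, (volume (FF n)).toReal * ((CC n).ncard : ℝ)
        = ∏ i, (2 * a n i * (2 * (Lf hm n (a n) (g (kseq g hm n)) i : ℝ) + 1) * wgt g hm n i) := by
      intro n
      have hsplit : ∏ i, (2 * a n i * (2 * (Lf hm n (a n) (g (kseq g hm n)) i : ℝ) + 1)
          * wgt g hm n i)
          = (∏ i, 2 * a n i) * (∏ i, (2 * (Lf hm n (a n) (g (kseq g hm n)) i : ℝ) + 1))
            * (∏ i, wgt g hm n i) := by
        rw [Finset.prod_mul_distrib, Finset.prod_mul_distrib]
      rw [hsplit, wgt_prod, hVol n, hncardC n, hW]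
      push_cast
      ring
    have hdpos : ∀ n, 0 < (volume (FF n)).toReal * ((CC n).ncard : ℝ) := by
      intro n
      rw [hVol n]
      have h1 := hVolpos n
      have h2 : (0:ℝ) < ((CC n).ncard : ℝ) := by
        rw [hncardC n]
        have h3 := hcardpos n
        rw [hcard n] at h3
        exact_mod_cast h3
      positivity
    have hf_low : ∀ n, 1 ≤ f n := by
      intro n
      rw [hf]
      rw [one_le_div (hdpos n)]
      rw [hden n, hVol (n + 1)]
      refine Finset.prod_le_prod (fun i _ => ?_) (fun i _ => ?_)
      · have h1 := hapos n i
        have h2 : 0 ≤ wgt g hm n i := by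
          unfold wgt
          split_ifs
          · positivity
          · norm_num
        positivity
      · have h := hfac_low g hm hg n i
        rw [← ha] at h
        nlinarith [h]
    have hf_up : ∀ n, f n ≤ (1 + (2⁻¹:ℝ) ^ n) ^ m := by
      intro n
      rw [hf, div_le_iff₀ (hdpos n), hden n, hVol (n + 1)]
      calc (∏ i, 2 * a (n + 1) i)
          ≤ ∏ i, (1 + (2⁻¹:ℝ) ^ n) *
            (2 * a n i * (2 * (Lf hm n (a n) (g (kseq g hm n)) i : ℝ) + 1) * wgt g hm n i) := by
            refine Finset.prod_le_prod (fun i _ => ?_) (fun i _ => ?_)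
            · have := hapos (n + 1) i; positivity
            · have h := hfac_up g hm hg n i
              rw [← ha] at h
              nlinarith [h]
      _ = (1 + (2⁻¹:ℝ) ^ n) ^ m *
            ∏ i, (2 * a n i * (2 * (Lf hm n (a n) (g (kseq g hm n)) i : ℝ) + 1) * wgt g hm n i) := by
            rw [Finset.prod_mul_distrib, Finset.prod_const, Finset.card_univ, Fintype.card_fin]
      _ = _ := by ring
    have hPdef : ∀ N, P N = ∏ n ∈ Finset.range N, f n := fun N => rfl
    have hPmono : Monotone P := by
      apply monotone_nat_of_le_succ
      intro N
      rw [hPdef, hPdef, Finset.prod_range_succ]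
      have h1 : (0:ℝ) ≤ ∏ n ∈ Finset.range N, f n := by
        refine Finset.prod_nonneg fun n _ => ?_
        linarith [hf_low n]
      exact le_mul_of_one_le_right h1 (hf_low N)
    have hPbdd : ∀ N, P N ≤ Real.exp (2 * m) := by
      intro N
      rw [hPdef]
      calc (∏ n ∈ Finset.range N, f n)
          ≤ ∏ n ∈ Finset.range N, Real.exp ((m : ℝ) * (2⁻¹:ℝ) ^ n) := by
            refine Finset.prod_le_prod (fun n _ => ?_) (fun n _ => ?_)
            · linarith [hf_low n]
            · refine le_trans (hf_up n) ?_
              rw [Real.exp_nat_mul]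
              refine pow_le_pow_left₀ (by positivity) ?_ m
              have := Real.add_one_le_exp ((2⁻¹:ℝ) ^ n)
              linarith
      _ = Real.exp (∑ n ∈ Finset.range N, (m : ℝ) * (2⁻¹:ℝ) ^ n) := (Real.exp_sum _ _).symm
      _ ≤ Real.exp (2 * m) := by
            rw [Real.exp_le_exp]
            rw [← Finset.mul_sum]
            have hgeo : ∑ n ∈ Finset.range N, ((2⁻¹:ℝ)) ^ n ≤ 2 := by
              have := sum_geometric_two_le N
              simpa [one_div] using this
            have hm0 : (0:ℝ) ≤ (m:ℝ) := Nat.cast_nonneg m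
            nlinarith
    refine ⟨⨆ N, P N, ?_⟩
    exact tendsto_atTop_ciSup hPmono ⟨Real.exp (2 * m), by rintro x ⟨N, rfl⟩; exact hPbdd N⟩
  · -- rigidity
    have hup : ∀ n, ((CC n ∩ (fun x => x - g (kseq g hm n)) '' CC n).ncard : ℝ)
        / ((CC n).ncard : ℝ) ≤ 1 := by
      intro n
      rw [div_le_one]
      · have h1 : (CC n ∩ (fun x => x - g (kseq g hm n)) '' CC n).ncard ≤ (CC n).ncard :=
          Set.ncard_le_ncard Set.inter_subset_left (Cfin g hm n).finite_toSet
        exact_mod_cast h1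
      · have h3 := hcardpos n
        have h4 : (CC n).ncard = (Cfin g hm n).card := Set.ncard_coe_finset _
        rw [h4]
        exact_mod_cast h3
    have hlow : ∀ n, (2 * (2:ℝ) ^ n) / (2 * 2 ^ n + 1)
        ≤ ((CC n ∩ (fun x => x - g (kseq g hm n)) '' CC n).ncard : ℝ) / ((CC n).ncard : ℝ) := by
      intro n
      have hsub : (Dfin g hm n : Set (Fin m → ℝ)) ⊆
          CC n ∩ (fun x => x - g (kseq g hm n)) '' CC n := by
        refine Set.subset_inter ?_ (Dfin_subset_shift g hm n)
        rw [hCC]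
        exact_mod_cast Dfin_subset_C g hm n
      have hfin : (CC n ∩ (fun x => x - g (kseq g hm n)) '' CC n).Finite :=
        Set.Finite.inter_of_left (Cfin g hm n).finite_toSet _
      have h1 : (Dfin g hm n).card ≤ (CC n ∩ (fun x => x - g (kseq g hm n)) '' CC n).ncard := by
        rw [← Set.ncard_coe_finset]
        exact Set.ncard_le_ncard hsub hfin
      rw [Dfin_card g hm hg n] at h1
      have hC' : ((CC n).ncard : ℝ) = (2 * 2 ^ n + 1) * (W n : ℝ) := by
        rw [hCC, Set.ncard_coe_finset, hcard n]
        push_cast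
        ring
      have hN1 : (2 * (2:ℝ) ^ n) * (W n : ℝ)
          ≤ ((CC n ∩ (fun x => x - g (kseq g hm n)) '' CC n).ncard : ℝ) := by
        have := h1
        have h2 : ((2 * 2 ^ n * W n : ℕ) : ℝ)
            ≤ ((CC n ∩ (fun x => x - g (kseq g hm n)) '' CC n).ncard : ℝ) := by
          exact_mod_cast this
        calc (2 * (2:ℝ) ^ n) * (W n : ℝ) = ((2 * 2 ^ n * W n : ℕ) : ℝ) := by push_cast; ring
        _ ≤ _ := h2
      rw [div_le_div_iff₀ (by positivity) ?_]
      · rw [hC']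
        have hWr : (0:ℝ) < (W n : ℝ) := by exact_mod_cast hWpos n
        nlinarith [hN1, hWr]
      · rw [hC']
        have hWr : (0:ℝ) < (W n : ℝ) := by exact_mod_cast hWpos n
        positivity
    have hl : Tendsto (fun n => (2 * (2:ℝ) ^ n) / (2 * 2 ^ n + 1)) atTop (𝓝 1) := by
      have h0 : Tendsto (fun n : ℕ => (2 * (2:ℝ) ^ n + 1)) atTop atTop := by
        have h1 : Tendsto (fun n : ℕ => (2:ℝ) ^ n) atTop atTop :=
          tendsto_pow_atTop_atTop_of_one_lt (by norm_num)
        have h2 := h1.const_mul_atTop (show (0:ℝ) < 2 by norm_num)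
        exact tendsto_atTop_add_const_right _ 1 h2
      have h3 : Tendsto (fun n : ℕ => 1 - (2 * (2:ℝ) ^ n + 1)⁻¹) atTop (𝓝 1) := by
        have h4 := h0.inv_tendsto_atTop
        have := tendsto_const_nhds (x := (1:ℝ)) (f := atTop (α := ℕ))
        have h5 := Tendsto.sub this h4
        simpa using h5
      refine h3.congr fun n => ?_
      have hpos : (0:ℝ) < 2 * 2 ^ n + 1 := by positivity
      field_simp
      ring
    exact tendsto_of_tendsto_of_tendsto_of_le_of_le hl tendsto_const_nhds hlow hup
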